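/- Let F and G be m×n matrices over 𝔽₂ and let α ≤ m be a nonnegative integer such that F and G agree in their first m − α rows. Then rank(F) − dim(range(F) ∩ range(G)) ≤ min(n, α). -/
import Mathlib

open Module

/-- If `F` and `G` agree on their first `m - α` rows, then
`rank F - dim (range F ∩ range G) ≤ min n α`. -/
theorem rank_sub_dim_inter_le_of_agree_first_rows
    (m n α : ℕ) (hα : α ≤ m)
    (F G : Matrix (Fin m) (Fin n) (ZMod 2))
    (hagree : ∀ i : Fin m, (i : ℕ) < m - α → ∀ j : Fin n, F i j = G i j) :
    F.rank - Module.finrank (ZMod 2)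
        ↥(LinearMap.range F.mulVecLin ⊓ LinearMap.range G.mulVecLin)
      ≤ min n α := by
  classical
  set D : Matrix (Fin m) (Fin n) (ZMod 2) := F - G with hD
  set RF := LinearMap.range F.mulVecLin
  set RG := LinearMap.range G.mulVecLin
  set RD := LinearMap.range D.mulVecLin
  -- vectors in range D vanish on the first m - α coordinates
  have hvanish : ∀ v ∈ RD, ∀ i : Fin m, (i : ℕ) < m - α → v i = 0 := by
    rintro v ⟨x, rfl⟩ i hi
    show D.mulVec x i = 0
    unfold Matrix.mulVec dotProduct
    apply Finset.sum_eq_zero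
    intro j _
    have : D i j = 0 := by
      simp [hD, Matrix.sub_apply, hagree i hi j]
    simp [this]
  -- finrank RD ≤ α via injective map to Fin α → ZMod 2
  have hDle : finrank (ZMod 2) RD ≤ α := by
    let π : (Fin m → ZMod 2) →ₗ[ZMod 2] (Fin α → ZMod 2) :=
      { toFun := fun v k => v ⟨m - α + k, by omega⟩
        map_add' := by intros; rfl
        map_smul' := by intros; rfl }
    have hinj : Function.Injective (π.comp RD.subtype) := by
      rw [← LinearMap.ker_eq_bot, LinearMap.ker_eq_bot']
      rintro ⟨v, hv⟩ hzero
      ext i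
      have h0 : ∀ k : Fin α, v ⟨m - α + k, by omega⟩ = 0 := by
        intro k
        exact congrFun hzero k
      by_cases hi : (i : ℕ) < m - α
      · exact hvanish v hv i hi
      · have hk : (i : ℕ) - (m - α) < α := by omega
        have := h0 ⟨(i : ℕ) - (m - α), hk⟩
        simpa [show m - α + ((i : ℕ) - (m - α)) = (i : ℕ) by omega, Fin.eta] using this
    calc finrank (ZMod 2) RD ≤ finrank (ZMod 2) (Fin α → ZMod 2) :=
          LinearMap.finrank_le_finrank_of_injective hinj
      _ = α := by simp
  -- range F ≤ range G ⊔ range D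
  have hsub : RF ≤ RG ⊔ RD := by
    rintro v ⟨x, rfl⟩
    have : F.mulVecLin x = G.mulVecLin x + D.mulVecLin x := by
      simp only [hD, Matrix.mulVecLin_apply, Matrix.sub_mulVec]
      abel
    rw [this]
    exact Submodule.add_mem _ (Submodule.mem_sup_left ⟨x, rfl⟩)
      (Submodule.mem_sup_right ⟨x, rfl⟩)
  have h1 : finrank (ZMod 2) ↥(RF ⊔ RG) + finrank (ZMod 2) ↥(RF ⊓ RG)
      = finrank (ZMod 2) RF + finrank (ZMod 2) RG :=
    Submodule.finrank_sup_add_finrank_inf_eq RF RG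
  have h2 : finrank (ZMod 2) ↥(RF ⊔ RG) ≤ finrank (ZMod 2) ↥(RG ⊔ RD) :=
    Submodule.finrank_mono (sup_le (le_trans hsub le_rfl) le_sup_left)
  have h3 : finrank (ZMod 2) ↥(RG ⊔ RD) ≤ finrank (ZMod 2) RG + finrank (ZMod 2) RD := by
    have := Submodule.finrank_sup_add_finrank_inf_eq RG RD
    omega
  have hFn : F.rank ≤ n := F.rank_le_width
  have hFrank : F.rank = finrank (ZMod 2) RF := rfl
  omega
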